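/- Let p be a prime and G a noncyclic 2-generated finite p-group. Then Δ(G) is Hamiltonian. -/

import Mathlib

open SimpleGraph

/-- The generating graph of a group: `g ~ h` iff `g ≠ h` and `⟨g,h⟩ = G`. -/
def genGraph (G : Type*) [Group G] : SimpleGraph G where
  Adj g h := g ≠ h ∧ Subgroup.closure {g, h} = ⊤
  symm := by
    constructor
    rintro g h ⟨hne, hgen⟩
    exact ⟨hne.symm, by rwa [Set.pair_comm]⟩
  loopless := ⟨fun g h => h.1 rfl⟩

/-- A group is 2-generated if it is generated by two elements. -/
def TwoGenerated (G : Type*) [Group G] : Prop :=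
  ∃ x y : G, Subgroup.closure {x, y} = ⊤

/-- The set of non-isolated vertices of the generating graph. -/
def nonIso (G : Type*) [Group G] : Set G := {g | ∃ h, (genGraph G).Adj g h}

/-- `Δ(G)`: the generating graph with isolated vertices removed. -/
def deltaGraph (G : Type*) [Group G] : SimpleGraph (nonIso G) :=
  (genGraph G).induce (nonIso G)

lemma genGraph_adj {G : Type*} [Group G] {g h : G} :
    (genGraph G).Adj g h ↔ g ≠ h ∧ Subgroup.closure {g, h} = ⊤ := Iff.rfl

open Subgroup

section Comb
variable {V : Type*} [Fintype V] [DecidableEq V] {G : SimpleGraph V}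

lemma exists_path (f : ℕ → V) :
    ∀ (j : ℕ), (∀ i, i < j → G.Adj (f i) (f (i+1))) →
    ∃ p : G.Walk (f 0) (f j), p.support = (List.range (j+1)).map f ∧
      p.edges = (List.range j).map (fun i => s(f i, f (i+1))) := by
  intro j
  induction j with
  | zero => exact fun _ => ⟨Walk.nil, by simp [List.range_succ], by simp⟩
  | succ j ih =>
    intro h
    obtain ⟨p, hs, he⟩ := ih (fun i hi => h i (hi.trans (Nat.lt_succ_self j)))
    refine ⟨p.concat (h j (Nat.lt_succ_self j)), ?_, ?_⟩
    · rw [Walk.support_concat, hs]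
      simp [List.range_succ]
    · rw [Walk.edges_concat, he]
      simp [List.range_succ]

lemma hamiltonian_of_cyclic_enum (n : ℕ) (hn : 3 ≤ n) (f : ℕ → V)
    (hinj : ∀ i, i < n → ∀ j, j < n → f i = f j → i = j)
    (hsurj : ∀ v, ∃ i, i < n ∧ f i = v)
    (hadj : ∀ i, i + 1 < n → G.Adj (f i) (f (i+1)))
    (hclose : G.Adj (f (n-1)) (f 0)) : G.IsHamiltonian := by
  intro _
  obtain ⟨p, hs, he⟩ := exists_path (G := G) f (n-1)
    (fun i hi => hadj i (by omega))
  have hn1 : n - 1 + 1 = n := by omega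
  rw [hn1] at hs
  have hpath : p.IsPath := by
    apply Walk.IsPath.mk'
    rw [hs]
    refine List.Nodup.map_on ?_ List.nodup_range
    intro x hx y hy hxy
    exact hinj x (List.mem_range.mp hx) y (List.mem_range.mp hy) hxy
  have hemem : s(f (n-1), f 0) ∉ p.edges := by
    rw [he]
    intro hmem
    obtain ⟨i, hi, hie⟩ := List.mem_map.mp hmem
    rw [List.mem_range] at hi
    rw [Sym2.eq_iff] at hie
    rcases hie with ⟨h1, h2⟩ | ⟨h1, h2⟩
    · have := hinj i (by omega) (n-1) (by omega) h1
      omega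
    · have e1 := hinj i (by omega) 0 (by omega) h1
      have e2 := hinj (i+1) (by omega) (n-1) (by omega) h2
      omega
  have hcyc : (Walk.cons hclose p).IsCycle :=
    (Walk.cons_isCycle_iff p hclose).mpr ⟨hpath, hemem⟩
  refine ⟨f (n-1), Walk.cons hclose p, hcyc, ?_⟩
  intro a
  rw [Walk.support_tail_of_not_nil _ Walk.not_nil_cons, Walk.support_cons, List.tail_cons]
  refine (hpath.isHamiltonian_of_mem ?_) a
  intro w
  obtain ⟨i, hi, rfl⟩ := hsurj w
  rw [hs]
  exact List.mem_map.mpr ⟨i, List.mem_range.mpr hi, rfl⟩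

lemma hamiltonian_of_parts {B : Type*} [Fintype B] [DecidableEq B]
    (G : SimpleGraph V) (β : V → B)
    (hk : 3 ≤ Fintype.card B) (hsurj : Function.Surjective β)
    (hfib : ∀ b b', Nat.card {v // β v = b} = Nat.card {v // β v = b'})
    (hadj : ∀ v w, β v ≠ β w → G.Adj v w) : G.IsHamiltonian := by
  classical
  obtain ⟨eB⟩ : Nonempty (B ≃ Fin (Fintype.card B)) := ⟨Fintype.equivFin B⟩
  set k := Fintype.card B with hkdef
  have hk0 : 0 < k := by omega
  set m := Nat.card {v // β v = eB.symm ⟨0, hk0⟩} with hmdef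
  have hm : ∀ b, Nat.card {v // β v = b} = m := fun b => hfib b _
  have hm0 : 0 < m := by
    obtain ⟨v, hv⟩ := hsurj (eB.symm ⟨0, hk0⟩)
    have : Nonempty {v // β v = eB.symm ⟨0, hk0⟩} := ⟨⟨v, hv⟩⟩
    exact Nat.card_pos
  have fe : ∀ b : B, Nonempty ({v // β v = b} ≃ Fin m) := by
    intro b
    have : Fintype {v // β v = b} := Subtype.fintype _
    have hc : Fintype.card {v // β v = b} = m := by
      rw [← Nat.card_eq_fintype_card]; exact hm b
    exact ⟨Fintype.equivFinOfCardEq hc⟩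
  let feq : ∀ b : B, {v // β v = b} ≃ Fin m := fun b => Classical.choice (fe b)
  have hβφ : ∀ b j, β (((feq b).symm j : {v // β v = b}) : V) = b := fun b j => ((feq b).symm j).2
  set n := k * m with hndef
  have hn3 : 3 ≤ n := le_trans hk (Nat.le_mul_of_pos_right _ hm0)
  set f : ℕ → V := fun i =>
    (((feq (eB.symm ⟨i % k, Nat.mod_lt _ hk0⟩)).symm ⟨(i / k) % m, Nat.mod_lt _ hm0⟩ :
      {v // β v = eB.symm ⟨i % k, Nat.mod_lt _ hk0⟩}) : V) with hfdef
  have hβf : ∀ i, β (f i) = eB.symm ⟨i % k, Nat.mod_lt _ hk0⟩ := fun i => hβφ _ _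
  have hmodne : ∀ i j, i % k ≠ j % k → β (f i) ≠ β (f j) := by
    intro i j hne hcon
    rw [hβf, hβf] at hcon
    exact hne (Fin.mk.injEq _ _ _ _ ▸ (eB.symm.injective hcon))
  apply hamiltonian_of_cyclic_enum n hn3 f
  · -- injectivity
    intro i hi j hj hij
    have hbk : i % k = j % k := by
      by_contra hne
      exact hmodne i j hne (congrArg β hij)
    have hfin : (⟨i % k, Nat.mod_lt _ hk0⟩ : Fin k) = ⟨j % k, Nat.mod_lt _ hk0⟩ := by
      simp [hbk]
    rw [hfdef] at hij
    simp only at hij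
    rw [hfin] at hij
    have : (⟨(i / k) % m, Nat.mod_lt _ hm0⟩ : Fin m) = ⟨(j / k) % m, Nat.mod_lt _ hm0⟩ :=
      (feq _).symm.injective (Subtype.ext hij)
    have hdk : (i / k) % m = (j / k) % m := by simpa using this
    have hik : i / k < m := Nat.div_lt_iff_lt_mul hk0 |>.mpr (by rw [Nat.mul_comm]; omega)
    have hjk : j / k < m := Nat.div_lt_iff_lt_mul hk0 |>.mpr (by rw [Nat.mul_comm]; omega)
    rw [Nat.mod_eq_of_lt hik, Nat.mod_eq_of_lt hjk] at hdk
    have d1 := Nat.div_add_mod i k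
    have d2 := Nat.div_add_mod j k
    rw [hdk, hbk] at d1
    omega
  · -- surjectivity
    have hfeq : ∀ (i : ℕ) (b : B) (jj : Fin m),
        eB.symm ⟨i % k, Nat.mod_lt _ hk0⟩ = b → (⟨i / k % m, Nat.mod_lt _ hm0⟩ : Fin m) = jj →
        f i = (((feq b).symm jj : {v // β v = b}) : V) := by
      rintro i b jj rfl rfl
      rw [hfdef]
    intro v
    obtain ⟨b, j, hbj⟩ : ∃ (b : B) (j : Fin m), (((feq b).symm j : {v // β v = b}) : V) = v :=
      ⟨β v, feq (β v) ⟨v, rfl⟩, by simp⟩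
    refine ⟨(eB b : ℕ) + k * (j : ℕ), ?_, ?_⟩
    · have h1 : (eB b : ℕ) < k := (eB b).2
      have h2 : (j : ℕ) < m := j.2
      calc (eB b : ℕ) + k * (j : ℕ) < k + k * (j:ℕ) := by omega
        _ = k * ((j:ℕ) + 1) := by ring
        _ ≤ k * m := Nat.mul_le_mul_left _ (by omega)
    · have h1 : (eB b : ℕ) < k := (eB b).2
      have hmod : ((eB b : ℕ) + k * (j : ℕ)) % k = (eB b : ℕ) := by
        rw [Nat.add_mul_mod_self_left]; exact Nat.mod_eq_of_lt h1
      have hdiv : ((eB b : ℕ) + k * (j : ℕ)) / k = (j : ℕ) := by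
        rw [Nat.add_mul_div_left _ _ hk0, Nat.div_eq_of_lt h1]; omega
      rw [hfeq _ b j (by rw [show (⟨((eB b:ℕ) + k*(j:ℕ)) % k, Nat.mod_lt _ hk0⟩ : Fin k) = eB b
            from Fin.ext (by simp [hmod])]; exact eB.symm_apply_apply b)
          (Fin.ext (by simp [hdiv, Nat.mod_eq_of_lt j.2]))]
      exact hbj
  · -- adjacency consecutive
    intro i hi
    apply hadj
    apply hmodne
    intro hmod
    have hmodeq : Nat.ModEq k i (i+1) := hmod
    have := (Nat.modEq_iff_dvd' (Nat.le_succ i)).mp hmodeq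
    simp at this
    omega
  · -- closing edge
    apply hadj
    apply hmodne
    have hkm : k * (m-1) + k = k * m := by
      have h' : m - 1 + 1 = m := by omega
      calc k*(m-1)+k = k*((m-1)+1) := by ring
        _ = k*m := by rw [h']
    have h1 : (n-1) % k = k - 1 := by
      have hn1 : n - 1 = k * (m-1) + (k-1) := by omega
      rw [hn1, Nat.mul_add_mod, Nat.mod_eq_of_lt (by omega)]
    have h2 : 0 % k = 0 := Nat.zero_mod k
    omega

end Comb

section Grp

variable {p : ℕ} [Fact p.Prime]

/-- elements lying in every maximal subgroup lie in the frattini subgroup -/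
lemma mem_frattini_of_forall {G : Type*} [Group G] {g : G}
    (h : ∀ M : Subgroup G, IsCoatom M → g ∈ M) : g ∈ frattini G := by
  unfold frattini Order.radical
  rw [Subgroup.mem_iInf]
  intro M
  rw [Subgroup.mem_iInf]
  exact fun hM => h M hM

/-- a quotient of a finite group by a coatom of the subgroup lattice, when the group
is a p-group, has cardinality p -/
lemma card_quotient_coatom {Q : Type*} [Group Q] [Finite Q] (hQ : IsPGroup p Q)
    {M : Subgroup Q} [M.Normal] (hM : IsCoatom M) : Nat.card (Q ⧸ M) = p := by
  -- the quotient has only trivial subgroups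
  have htriv : ∀ H : Subgroup (Q ⧸ M), H = ⊥ ∨ H = ⊤ := by
    intro H
    have hle : M ≤ H.comap (QuotientGroup.mk' M) := by
      intro x hx
      have h1 : ((x : Q ⧸ M)) = 1 := (QuotientGroup.eq_one_iff x).mpr hx
      simp only [mem_comap, QuotientGroup.mk'_apply, h1]
      exact H.one_mem
    rcases eq_or_lt_of_le hle with heq | hlt
    · left
      have : H = (H.comap (QuotientGroup.mk' M)).map (QuotientGroup.mk' M) :=
        (Subgroup.map_comap_eq_self_of_surjective (QuotientGroup.mk'_surjective M) H).symm
      rw [this, ← heq]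
      ext x
      simp only [Subgroup.mem_map, Subgroup.mem_bot]
      constructor
      · rintro ⟨y, hy, rfl⟩
        exact (QuotientGroup.eq_one_iff y).mpr hy
      · rintro rfl
        exact ⟨1, M.one_mem, rfl⟩
    · right
      have := hM.2 _ hlt
      rw [← Subgroup.map_comap_eq_self_of_surjective (QuotientGroup.mk'_surjective M) H, this]
      exact Subgroup.map_top_of_surjective _ (QuotientGroup.mk'_surjective M)
  -- the quotient is a nontrivial p-group
  have hQM : IsPGroup p (Q ⧸ M) := hQ.to_quotient M
  have hnt : Nontrivial (Q ⧸ M) := by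
    obtain ⟨x, hx⟩ : ∃ x, x ∉ M := by
      by_contra h
      push_neg at h
      exact hM.1 (Subgroup.eq_top_iff' M |>.mpr h)
    exact ⟨(x : Q ⧸ M), 1, fun h => hx ((QuotientGroup.eq_one_iff x).mp h)⟩
  obtain ⟨n, hn⟩ := IsPGroup.iff_card.mp hQM
  have hn1 : 1 ≤ n := by
    rcases Nat.eq_zero_or_pos n with rfl | h
    · exfalso
      rw [pow_zero] at hn
      exact (Finite.one_lt_card_iff_nontrivial.mpr hnt).ne' hn
    · exact h
  have hpdvd : p ∣ Nat.card (Q ⧸ M) := by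
    rw [hn]
    exact dvd_pow_self p (by omega)
  obtain ⟨x, hx⟩ := exists_prime_orderOf_dvd_card' p hpdvd
  have hxne : x ≠ 1 := by
    intro h
    rw [h, orderOf_one] at hx
    exact (Fact.out : p.Prime).one_lt.ne hx
  have hzp : Subgroup.zpowers x = ⊤ := by
    rcases htriv (Subgroup.zpowers x) with h | h
    · exact absurd (h ▸ Subgroup.mem_zpowers x) (by simp [hxne])
    · exact h
  have h1 := Nat.card_zpowers x
  rw [hzp, hx] at h1
  rw [← h1]
  exact (Nat.card_congr Subgroup.topEquiv.toEquiv).symm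

end Grp

section Grp2
variable {p : ℕ} [Fact p.Prime] {Q : Type*} [Group Q] [Finite Q]

lemma coatom_normal (hQ : IsPGroup p Q) {M : Subgroup Q} (hM : IsCoatom M) : M.Normal := by
  haveI := hQ.isNilpotent
  exact Subgroup.NormalizerCondition.normal_of_coatom M normalizerCondition_of_isNilpotent hM

lemma comm_of_frattini_bot (hQ : IsPGroup p Q) (hfr : frattini Q = ⊥) (x y : Q) :
    Commute x y := by
  have key : (x * y) * (y * x)⁻¹ ∈ frattini Q := by
    apply mem_frattini_of_forall
    intro M hM
    haveI := coatom_normal hQ hM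
    haveI : Fact (Nat.card (Q ⧸ M) = p) := ⟨card_quotient_coatom hQ hM⟩
    rw [← QuotientGroup.eq_one_iff]
    haveI : IsCyclic (Q ⧸ M) := isCyclic_of_prime_card (p := p) Fact.out
    letI : CommGroup (Q ⧸ M) := IsCyclic.commGroup
    simp only [QuotientGroup.mk_mul, QuotientGroup.mk_inv]
    rw [mul_comm ((x : Q) : Q ⧸ M) ((y : Q) : Q ⧸ M)]
    group
  rw [hfr, Subgroup.mem_bot] at key
  have : x * y = y * x := by
    have := mul_eq_one_iff_eq_inv.mp key
    simpa using this
  exact this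

lemma pow_p_eq_one_of_frattini_bot (hQ : IsPGroup p Q) (hfr : frattini Q = ⊥) (x : Q) :
    x ^ p = 1 := by
  have key : x ^ p ∈ frattini Q := by
    apply mem_frattini_of_forall
    intro M hM
    haveI := coatom_normal hQ hM
    rw [← QuotientGroup.eq_one_iff]
    rw [QuotientGroup.mk_pow]
    have hcard := card_quotient_coatom hQ hM
    calc ((x : Q ⧸ M)) ^ p = ((x : Q ⧸ M)) ^ (Nat.card (Q ⧸ M)) := by rw [hcard]
    _ = 1 := pow_card_eq_one'
  rwa [hfr, Subgroup.mem_bot] at key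

end Grp2

section Grp3
variable {p : ℕ} [Fact p.Prime] {Q : Type*} [Group Q] [Finite Q]

lemma subgroup_eq_of_le_of_card_le {H K : Subgroup Q} (hle : H ≤ K)
    (hcard : Nat.card K ≤ Nat.card H) : H = K := by
  apply SetLike.ext'
  apply Set.eq_of_subset_of_ncard_le hle _ (Set.toFinite _)
  rwa [← Nat.card_coe_set_eq, ← Nat.card_coe_set_eq]

lemma card_of_two_gen (hQ : IsPGroup p Q) (hfr : frattini Q = ⊥)
    (hnc : ¬ IsCyclic Q) {a b : Q} (hab : Subgroup.closure {a, b} = ⊤) :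
    Nat.card Q = p ^ 2 := by
  have hcomm := comm_of_frattini_bot hQ hfr
  have hexp := pow_p_eq_one_of_frattini_bot hQ hfr
  set S : Subgroup Q :=
    { carrier := {z | ∃ i j : ℤ, z = a ^ i * b ^ j}
      one_mem' := ⟨0, 0, by simp⟩
      mul_mem' := by
        rintro u v ⟨i, j, rfl⟩ ⟨k, l, rfl⟩
        refine ⟨i + k, j + l, ?_⟩
        rw [zpow_add, zpow_add]
        calc a ^ i * b ^ j * (a ^ k * b ^ l)
            = a ^ i * (b ^ j * a ^ k) * b ^ l := by group
          _ = a ^ i * (a ^ k * b ^ j) * b ^ l := by rw [((hcomm b a).zpow_zpow j k).eq]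
          _ = a ^ i * a ^ k * (b ^ j * b ^ l) := by group
      inv_mem' := by
        rintro u ⟨i, j, rfl⟩
        refine ⟨-i, -j, ?_⟩
        rw [zpow_neg, zpow_neg, mul_inv_rev]
        exact (((hcomm a b).zpow_zpow i j).inv_inv).eq.symm } with hSdef
  have hStop : S = ⊤ := by
    rw [eq_top_iff, ← hab]
    apply Subgroup.closure_le _ |>.mpr
    intro z hz
    rcases hz with rfl | rfl
    · exact ⟨1, 0, by simp⟩
    · exact ⟨0, 1, by simp⟩
  have hsurj : Function.Surjective (fun c : ZMod p × ZMod p => a ^ (c.1.val) * b ^ (c.2.val)) := by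
    intro z
    have hz : z ∈ S := hStop ▸ Subgroup.mem_top z
    obtain ⟨i, j, rfl⟩ := hz
    have hp0 : (0:ℤ) < (p:ℤ) := by exact_mod_cast (Fact.out : p.Prime).pos
    have key : ∀ c : Q, c ^ p = 1 → ∀ i : ℤ, c ^ i = c ^ ((i % (p:ℤ)).toNat) := by
      intro c hc i
      have hpc : c ^ ((p:ℕ) : ℤ) = 1 := by rw [zpow_natCast]; exact hc
      conv_lhs => rw [← Int.emod_add_mul_ediv i (p:ℤ)]
      rw [zpow_add, zpow_mul, hpc, one_zpow, mul_one,
        ← zpow_natCast, Int.toNat_of_nonneg (Int.emod_nonneg i (by omega))]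
    have hilt : (i % (p:ℤ)).toNat < p := by
      have := Int.emod_lt_of_pos i hp0
      have := Int.emod_nonneg i (show (p:ℤ) ≠ 0 by omega)
      omega
    have hjlt : (j % (p:ℤ)).toNat < p := by
      have := Int.emod_lt_of_pos j hp0
      have := Int.emod_nonneg j (show (p:ℤ) ≠ 0 by omega)
      omega
    refine ⟨⟨(((i % (p:ℤ)).toNat : ZMod p)), (((j % (p:ℤ)).toNat : ZMod p))⟩, ?_⟩
    simp only
    rw [ZMod.val_cast_of_lt hilt, ZMod.val_cast_of_lt hjlt,
      ← key a (hexp a) i, ← key b (hexp b) j]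
  have hle : Nat.card Q ≤ p ^ 2 := by
    have := Nat.card_le_card_of_surjective _ hsurj
    calc Nat.card Q ≤ Nat.card (ZMod p × ZMod p) := this
      _ = p ^ 2 := by rw [Nat.card_prod, Nat.card_zmod, sq]
  obtain ⟨n, hn⟩ := IsPGroup.iff_card.mp hQ
  have hp1 : 1 < p := (Fact.out : p.Prime).one_lt
  have hn2 : n ≤ 2 := by
    by_contra h
    have : p ^ 3 ≤ p ^ n := Nat.pow_le_pow_right (by omega) (by omega)
    have h3 : p ^ 2 < p ^ 3 := Nat.pow_lt_pow_right hp1 (by omega)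
    omega
  interval_cases n
  · exfalso
    rw [pow_zero] at hn
    have : Subsingleton Q := Nat.card_eq_one_iff_unique.mp hn |>.1
    exact hnc isCyclic_of_subsingleton
  · exact absurd (isCyclic_of_prime_card (p := p) (by simpa using hn)) hnc
  · exact hn

lemma closure_pair_eq_top_of (hcard : Nat.card Q = p ^ 2) (hexp : ∀ x : Q, x ^ p = 1)
    {x y : Q} (hx : x ≠ 1) (hy : y ∉ Subgroup.zpowers x) :
    Subgroup.closure {x, y} = ⊤ := by
  have hp1 : 1 < p := (Fact.out : p.Prime).one_lt
  have hox : orderOf x = p := by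
    have h1 : orderOf x ∣ p := orderOf_dvd_of_pow_eq_one (hexp x)
    rcases (Nat.dvd_prime (Fact.out : p.Prime)).mp h1 with h | h
    · exact absurd (orderOf_eq_one_iff.mp h) hx
    · exact h
  set H := Subgroup.closure {x, y} with hHdef
  have hxH : Subgroup.zpowers x ≤ H :=
    Subgroup.zpowers_le.mpr (Subgroup.subset_closure (by simp))
  have hyH : y ∈ H := Subgroup.subset_closure (by simp)
  have hdvd : Nat.card H ∣ p ^ 2 := hcard ▸ Subgroup.card_subgroup_dvd_card H
  obtain ⟨k, hk2, hkcard⟩ := (Nat.dvd_prime_pow (Fact.out : p.Prime)).mp hdvd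
  have hpx : Nat.card (Subgroup.zpowers x) = p := by rw [Nat.card_zpowers, hox]
  have hpH : p ∣ Nat.card H := by rw [← hpx]; exact Subgroup.card_dvd_of_le hxH
  have hk1 : 1 ≤ k := by
    by_contra h
    rw [show k = 0 by omega, pow_zero] at hkcard
    rw [hkcard] at hpH
    have := Nat.dvd_one.mp hpH
    omega
  interval_cases k
  · exfalso
    have : Subgroup.zpowers x = H :=
      subgroup_eq_of_le_of_card_le hxH (by rw [hkcard, pow_one, hpx])
    exact hy (this ▸ hyH)
  · exact Subgroup.eq_top_of_card_eq H (by rw [hkcard, hcard])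

lemma zpowers_eq_of_mem (hexp : ∀ x : Q, x ^ p = 1) {x y : Q}
    (hx : x ≠ 1) (hy : y ≠ 1) (h : y ∈ Subgroup.zpowers x) :
    Subgroup.zpowers y = Subgroup.zpowers x := by
  have hord : ∀ z : Q, z ≠ 1 → orderOf z = p := by
    intro z hz
    have h1 : orderOf z ∣ p := orderOf_dvd_of_pow_eq_one (hexp z)
    rcases (Nat.dvd_prime (Fact.out : p.Prime)).mp h1 with h | h
    · exact absurd (orderOf_eq_one_iff.mp h) hz
    · exact h
  apply subgroup_eq_of_le_of_card_le (Subgroup.zpowers_le.mpr h)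
  rw [Nat.card_zpowers, Nat.card_zpowers, hord x hx, hord y hy]

end Grp3

section Bridge
variable {G : Type*} [Group G] [Finite G]

instance finite_subgroup : Finite (Subgroup G) :=
  Finite.of_injective (fun H : Subgroup G => (H : Set G)) SetLike.coe_injective

/-- The image of a maximal subgroup under the Frattini quotient map is maximal. -/
lemma isCoatom_map_frattini {M : Subgroup G} (hM : IsCoatom M) :
    IsCoatom (M.map (QuotientGroup.mk' (frattini G))) := by
  set π := QuotientGroup.mk' (frattini G) with hπ
  have hker : π.ker = frattini G := QuotientGroup.ker_mk' _
  have hcm : Subgroup.comap π (M.map π) = M := by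
    rw [Subgroup.comap_map_eq, hker, sup_eq_left.mpr (frattini_le_coatom hM)]
  constructor
  · intro htop
    rw [htop, Subgroup.comap_top] at hcm
    exact hM.1 hcm.symm
  · intro N hlt
    have hle : M ≤ Subgroup.comap π N := hcm ▸ Subgroup.comap_mono hlt.le
    have hne : M ≠ Subgroup.comap π N := by
      intro heq
      have : N = M.map π := by
        rw [← Subgroup.map_comap_eq_self_of_surjective (QuotientGroup.mk'_surjective _) N, ← heq]
      exact hlt.ne' this
    have := hM.2 _ (lt_of_le_of_ne hle hne)
    rw [← Subgroup.map_comap_eq_self_of_surjective (QuotientGroup.mk'_surjective _) N, this]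
    exact Subgroup.map_top_of_surjective _ (QuotientGroup.mk'_surjective _)

lemma frattini_quotient_eq_bot : frattini (G ⧸ frattini G) = ⊥ := by
  rw [eq_bot_iff]
  intro q hq
  obtain ⟨g, rfl⟩ := QuotientGroup.mk'_surjective (frattini G) q
  rw [Subgroup.mem_bot]
  rw [QuotientGroup.mk'_apply, QuotientGroup.eq_one_iff]
  apply mem_frattini_of_forall
  intro M hM
  have hMc := isCoatom_map_frattini hM
  have hmem : QuotientGroup.mk' (frattini G) g ∈ M.map (QuotientGroup.mk' (frattini G)) :=
    frattini_le_coatom hMc hq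
  have : g ∈ Subgroup.comap (QuotientGroup.mk' (frattini G)) (M.map (QuotientGroup.mk' (frattini G))) := hmem
  rwa [Subgroup.comap_map_eq, QuotientGroup.ker_mk',
    sup_eq_left.mpr (frattini_le_coatom hM)] at this

lemma lift_eq_top {K : Subgroup G} (h : K.map (QuotientGroup.mk' (frattini G)) = ⊤) :
    K = ⊤ := by
  have := Subgroup.comap_map_eq (f := QuotientGroup.mk' (frattini G)) K
  rw [h, Subgroup.comap_top, QuotientGroup.ker_mk'] at this
  exact frattini_nongenerating this.symm

end Bridge

/-- counting fibers of a surjective homomorphism over a set -/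
lemma card_fiber_eq {G Q : Type*} [Group G] [Group Q] (π : G →* Q)
    (hsurj : Function.Surjective π) (S : Set Q) :
    Nat.card {g : G // π g ∈ S} = Nat.card S * Nat.card π.ker := by
  choose σ hσ using hsurj
  have e : {g : G // π g ∈ S} ≃ S × π.ker :=
    { toFun := fun g => (⟨π g.val, g.2⟩,
        ⟨(σ (π g.val))⁻¹ * g.val, by simp [MonoidHom.mem_ker, hσ]⟩)
      invFun := fun x => ⟨σ x.1.val * x.2.val, by
        have : π x.2.val = 1 := x.2.2
        simp [hσ, this, x.1.2]⟩
      left_inv := fun g => by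
        ext
        simp
      right_inv := fun x => by
        have h2 : π x.2.val = 1 := x.2.2
        ext
        · simp [hσ, h2]
        · simp [hσ, h2] }
  rw [Nat.card_congr e, Nat.card_prod]

open scoped Classical in
theorem stmt_13 (p : ℕ) (hp : p.Prime) (G : Type*) [Group G] [Fintype G]
    (hG : IsPGroup p G) (hnc : ¬ IsCyclic G) (h2 : TwoGenerated G) :
    (deltaGraph G).IsHamiltonian := by
  haveI : Fact p.Prime := ⟨hp⟩
  set π := QuotientGroup.mk' (frattini G) with hπdef
  have hπs : Function.Surjective π := QuotientGroup.mk'_surjective _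
  have hQp : IsPGroup p (G ⧸ frattini G) := hG.to_quotient _
  have hfrb : frattini (G ⧸ frattini G) = ⊥ := frattini_quotient_eq_bot
  have hexp := pow_p_eq_one_of_frattini_bot hQp hfrb
  have hQnc : ¬ IsCyclic (G ⧸ frattini G) := by
    intro hcyc
    obtain ⟨x, hx⟩ := hcyc.exists_generator
    obtain ⟨g, rfl⟩ := hπs x
    have h1 : Subgroup.zpowers (π g) ≤ Subgroup.closure {π g} :=
      Subgroup.zpowers_le.mpr (Subgroup.mem_closure_singleton_self _)
    have hmapK : (Subgroup.closure {g}).map π = ⊤ := by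
      rw [MonoidHom.map_closure, Set.image_singleton, eq_top_iff]
      intro z _
      exact h1 (hx z)
    have hKtop : Subgroup.closure {g} = ⊤ := lift_eq_top hmapK
    refine hnc ⟨⟨g, fun z => ?_⟩⟩
    have hz : z ∈ Subgroup.closure {g} := by rw [hKtop]; trivial
    exact Subgroup.mem_zpowers_iff.mpr (Subgroup.mem_closure_singleton.mp hz)
  obtain ⟨x0, y0, hxy0⟩ := h2
  have habQ : Subgroup.closure {π x0, π y0} = ⊤ := by
    rw [← Set.image_pair, ← MonoidHom.map_closure, hxy0]
    exact Subgroup.map_top_of_surjective _ hπs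
  have hcard : Nat.card (G ⧸ frattini G) = p ^ 2 := card_of_two_gen hQp hfrb hQnc habQ
  have hnotop : ∀ z : G ⧸ frattini G, Subgroup.zpowers z ≠ ⊤ := by
    intro z h
    have h1 : orderOf z = p ^ 2 := by
      rw [← Nat.card_zpowers, h, ← hcard]
      exact Nat.card_congr Subgroup.topEquiv.toEquiv
    have h2' : orderOf z ∣ p := orderOf_dvd_of_pow_eq_one (hexp z)
    have h3 := Nat.le_of_dvd hp.pos h2'
    nlinarith [hp.one_lt]
  -- if a pair generates, both entries are nontrivial and independent
  have hgen_facts : ∀ a b : G ⧸ frattini G, Subgroup.closure {a, b} = ⊤ →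
      a ≠ 1 ∧ b ≠ 1 ∧ b ∉ Subgroup.zpowers a := by
    intro a b hab
    have hb' : ∀ c d : G ⧸ frattini G, Subgroup.closure {c, d} = ⊤ →
        d ∈ Subgroup.zpowers c → False := by
      intro c d hcd hmem
      have : Subgroup.closure {c, d} ≤ Subgroup.zpowers c := by
        apply (Subgroup.closure_le _).mpr
        intro z hz
        rcases hz with rfl | rfl
        · exact Subgroup.mem_zpowers _
        · exact hmem
      exact hnotop c (eq_top_iff.mpr (hcd ▸ this))
    refine ⟨?_, ?_, fun h => hb' a b hab h⟩
    · rintro rfl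
      exact hb' b 1 (by rwa [Set.pair_comm]) (Subgroup.one_mem _)
    · rintro rfl
      exact hb' a 1 hab (Subgroup.one_mem _)
  -- vertex membership
  have hmem : ∀ g : G, g ∈ nonIso G ↔ π g ≠ 1 := by
    intro g
    constructor
    · rintro ⟨h, hadj⟩
      obtain ⟨hne, hgen⟩ := genGraph_adj.mp hadj
      have htop : Subgroup.closure {π g, π h} = ⊤ := by
        rw [← Set.image_pair, ← MonoidHom.map_closure, hgen]
        exact Subgroup.map_top_of_surjective _ hπs
      exact (hgen_facts _ _ htop).1
    · intro hg1
      have hzx : ∃ z : G ⧸ frattini G, z ∉ Subgroup.zpowers (π g) := by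
        by_contra hno
        push_neg at hno
        exact hnotop (π g) ((Subgroup.eq_top_iff' _).mpr hno)
      obtain ⟨z, hz⟩ := hzx
      obtain ⟨h, rfl⟩ := hπs z
      refine ⟨h, genGraph_adj.mpr ⟨?_, ?_⟩⟩
      · rintro rfl
        exact hz (Subgroup.mem_zpowers _)
      · apply lift_eq_top
        rw [MonoidHom.map_closure, Set.image_pair]
        exact closure_pair_eq_top_of hcard hexp hg1 hz
  haveI : Finite (Subgroup (G ⧸ frattini G)) := finite_subgroup
  set β : ↥(nonIso G) → Subgroup (G ⧸ frattini G) :=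
    fun v => Subgroup.zpowers (π v.val) with hβdef
  haveI : Fintype ↥(Set.range β) := Fintype.ofFinite _
  haveI : DecidableEq ↥(Set.range β) := Classical.decEq _
  set βr : ↥(nonIso G) → ↥(Set.range β) :=
    fun v => ⟨β v, Set.mem_range_self v⟩ with hβrdef
  -- vertices from nontrivial elements of the quotient
  have hvert : ∀ q : G ⧸ frattini G, q ≠ 1 →
      ∃ v : ↥(nonIso G), β v = Subgroup.zpowers q := by
    intro q hq
    obtain ⟨g, rfl⟩ := hπs q
    exact ⟨⟨g, (hmem g).mpr hq⟩, rfl⟩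
  apply hamiltonian_of_parts (deltaGraph G) βr
  · -- at least three parts
    obtain ⟨ha1, hb1, hba⟩ := hgen_facts _ _ habQ
    set a := π x0
    set b := π y0
    have hab1 : a * b ≠ 1 := by
      intro h
      apply hba
      rw [show b = a⁻¹ from (mul_eq_one_iff_inv_eq.mp h).symm]
      exact Subgroup.inv_mem _ (Subgroup.mem_zpowers a)
    have hZab_a : Subgroup.zpowers (a*b) ≠ Subgroup.zpowers a := by
      intro h
      have : a * b ∈ Subgroup.zpowers a := h ▸ Subgroup.mem_zpowers _
      exact hba (by simpa using (Subgroup.zpowers a).mul_mem (Subgroup.inv_mem _ (Subgroup.mem_zpowers a)) this)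
    have hZab_b : Subgroup.zpowers (a*b) ≠ Subgroup.zpowers b := by
      intro h
      have h1 : a * b ∈ Subgroup.zpowers b := h ▸ Subgroup.mem_zpowers _
      have ha : a ∈ Subgroup.zpowers b := by
        simpa using (Subgroup.zpowers b).mul_mem h1 (Subgroup.inv_mem _ (Subgroup.mem_zpowers b))
      have : Subgroup.closure {a, b} ≤ Subgroup.zpowers b := by
        apply (Subgroup.closure_le _).mpr
        intro z hz
        rcases hz with rfl | rfl
        · exact ha
        · exact Subgroup.mem_zpowers _
      exact hnotop b (eq_top_iff.mpr (habQ ▸ this))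
    have hZa_b : Subgroup.zpowers a ≠ Subgroup.zpowers b := by
      intro h
      exact hba (h ▸ Subgroup.mem_zpowers b)
    obtain ⟨va, hva⟩ := hvert a ha1
    obtain ⟨vb, hvb⟩ := hvert b hb1
    obtain ⟨vab, hvab⟩ := hvert (a*b) hab1
    have d1 : βr va ≠ βr vb := by
      intro h
      exact hZa_b (by rw [← hva, ← hvb]; exact congrArg Subtype.val h)
    have d2 : βr va ≠ βr vab := by
      intro h
      exact hZab_a (by rw [← hva, ← hvab]; exact (congrArg Subtype.val h).symm)
    have d3 : βr vb ≠ βr vab := by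
      intro h
      exact hZab_b (by rw [← hvb, ← hvab]; exact (congrArg Subtype.val h).symm)
    calc (3 : ℕ) = ({βr va, βr vb, βr vab} : Finset _).card := by
          rw [Finset.card_insert_of_notMem (by simp [d1, d2]),
            Finset.card_insert_of_notMem (by simp [d3]), Finset.card_singleton]
      _ ≤ Fintype.card ↥(Set.range β) := Finset.card_le_univ _
  · -- surjective
    rintro ⟨Z, v, rfl⟩
    exact ⟨v, rfl⟩
  · -- equal fibers
    have key : ∀ Z : ↥(Set.range β),
        Nat.card {v : ↥(nonIso G) // βr v = Z} = (p - 1) * Nat.card π.ker := by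
      intro Z
      obtain ⟨v0, hv0⟩ := Z.2
      have hv01 : π v0.val ≠ 1 := (hmem _).mp v0.2
      have hiff : ∀ g : G, (g ∈ nonIso G ∧ Subgroup.zpowers (π g) = Z.val) ↔
          π g ∈ ((Z.val : Set (G ⧸ frattini G)) \ {1}) := by
        intro g
        constructor
        · rintro ⟨hg, hzp⟩
          have hg1 := (hmem g).mp hg
          exact ⟨hzp ▸ Subgroup.mem_zpowers _, hg1⟩
        · rintro ⟨hgZ, hg1⟩
          rw [Set.mem_singleton_iff] at hg1
          refine ⟨(hmem g).mpr hg1, ?_⟩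
          rw [← hv0] at hgZ ⊢
          exact zpowers_eq_of_mem hexp hv01 hg1 hgZ
      have e1 : {v : ↥(nonIso G) // βr v = Z} ≃
          {g : G // π g ∈ ((Z.val : Set (G ⧸ frattini G)) \ {1})} := by
        refine Equiv.trans (Equiv.subtypeEquivRight
          (q := fun v : ↥(nonIso G) => Subgroup.zpowers (π v.val) = Z.val) ?_) ?_
        · intro v
          constructor
          · intro h; exact congrArg Subtype.val h
          · intro h; exact Subtype.ext h
        refine Equiv.trans (Equiv.subtypeSubtypeEquivSubtypeInter
          (fun g : G => g ∈ nonIso G) (fun g : G => Subgroup.zpowers (π g) = Z.val)) ?_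
        exact Equiv.subtypeEquivRight hiff
      rw [Nat.card_congr e1, card_fiber_eq π hπs]
      congr 1
      -- card of Z.val minus identity is p - 1
      have hZcard : Nat.card Z.val = p := by
        rw [← hv0, Nat.card_zpowers]
        have h1 : orderOf (π v0.val) ∣ p := orderOf_dvd_of_pow_eq_one (hexp _)
        rcases (Nat.dvd_prime hp).mp h1 with h | h
        · exact absurd (orderOf_eq_one_iff.mp h) hv01
        · exact h
      rw [Nat.card_coe_set_eq,
        Set.ncard_diff_singleton_of_mem (Subgroup.one_mem Z.val)]
      rw [show (Z.val : Set (G ⧸ frattini G)).ncard = p from by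
        rw [← Nat.card_coe_set_eq]; exact hZcard]
    intro Z Z'
    rw [key Z, key Z']
  · -- adjacency
    intro v w hne
    have hβne : β v ≠ β w := fun h => hne (Subtype.ext h)
    have hv1 : π v.val ≠ 1 := (hmem _).mp v.2
    have hw1 : π w.val ≠ 1 := (hmem _).mp w.2
    have hzw : π w.val ∉ Subgroup.zpowers (π v.val) := by
      intro h
      exact hβne (zpowers_eq_of_mem hexp hv1 hw1 h).symm
    have htop : Subgroup.closure {v.val, w.val} = ⊤ := by
      apply lift_eq_top
      rw [MonoidHom.map_closure, Set.image_pair]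
      exact closure_pair_eq_top_of hcard hexp hv1 hzw
    have hne' : v.val ≠ w.val := by
      intro heq
      apply hβne
      rw [hβdef]
      simp only [heq]
    exact genGraph_adj.mpr ⟨hne', htop⟩
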